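/- The set {x^i · f_k(x,y) : i ∈ ℤ, k ≥ 0} is a ℤ-basis of the Laurent polynomial ring ℤ[x, x^{-1}, y]. -/

import Mathlib

/-- Generalized Fibonacci polynomials in ℤ[x,y] (x = X 0, y = X 1):
f_0 = 1, f_1 = y, f_k = y·f_{k-1} - x·f_{k-2}. -/
noncomputable def f2 : ℕ → MvPolynomial (Fin 2) ℤ
  | 0 => 1
  | 1 => MvPolynomial.X 1
  | k + 2 => MvPolynomial.X 1 * f2 (k + 1) - MvPolynomial.X 0 * f2 k


/-- The Laurent polynomial ring ℤ[x,x⁻¹,y], realised as polynomials in y over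
Laurent polynomials in x. -/
abbrev LPoly : Type := Polynomial (LaurentPolynomial ℤ)

/-- The image of f_k(x,y) in ℤ[x,x⁻¹,y] (x ↦ C (T 1), y ↦ X). -/
noncomputable def f2L (k : ℕ) : LPoly :=
  MvPolynomial.aeval ![Polynomial.C (LaurentPolynomial.T 1), Polynomial.X] (f2 k)

open Polynomial LaurentPolynomial

lemma f2L_zero : f2L 0 = 1 := by simp [f2L, f2]

lemma f2L_one : f2L 1 = Polynomial.X := by simp [f2L, f2]

lemma f2L_rec (k : ℕ) :
    f2L (k + 2) = Polynomial.X * f2L (k + 1) - Polynomial.C (T 1) * f2L k := by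
  simp only [f2L]
  rw [show f2 (k+2) = MvPolynomial.X 1 * f2 (k + 1) - MvPolynomial.X 0 * f2 k from rfl]
  simp [map_sub, map_mul]

lemma f2L_monic_deg : ∀ k, (f2L k).Monic ∧ (f2L k).degree = (k : WithBot ℕ) := by
  intro k
  induction k using Nat.twoStepInduction with
  | zero => simp [f2L_zero, monic_one]
  | one => simpa [f2L_one] using monic_X
  | more k ih1 ih2 =>
    obtain ⟨hm1, hd1⟩ := ih1
    obtain ⟨hm2, hd2⟩ := ih2
    rw [f2L_rec]
    have hX : (Polynomial.X * f2L (k + 1)).Monic := monic_X.mul hm2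
    have hdX : (Polynomial.X * f2L (k + 1)).degree = ((k + 2 : ℕ) : WithBot ℕ) := by
      rw [degree_mul, degree_X, hd2]
      push_cast
      ring
    have hdq : (Polynomial.C (T (1:ℤ)) * f2L k).degree < ((k + 2 : ℕ) : WithBot ℕ) := by
      calc (Polynomial.C (T (1:ℤ)) * f2L k).degree ≤ 0 + (k : WithBot ℕ) := by
            rw [degree_mul]
            exact add_le_add degree_C_le (le_of_eq hd1)
        _ = (k : WithBot ℕ) := by rw [zero_add]
        _ < ((k + 2 : ℕ) : WithBot ℕ) := by exact_mod_cast (by omega : k < k + 2)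
    refine ⟨hX.sub_of_left (hdX ▸ hdq), ?_⟩
    rw [degree_sub_eq_left_of_degree_lt (hdX ▸ hdq), hdX]

lemma f2L_coeff_self (k : ℕ) : (f2L k).coeff k = 1 := by
  obtain ⟨hm, hd⟩ := f2L_monic_deg k
  have hnd : (f2L k).natDegree = k := natDegree_eq_of_degree_eq_some hd
  have := hm.coeff_natDegree
  rwa [hnd] at this

lemma f2L_coeff_of_lt {k m : ℕ} (h : k < m) : (f2L k).coeff m = 0 := by
  apply coeff_eq_zero_of_degree_lt
  rw [(f2L_monic_deg k).2]
  exact_mod_cast h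

lemma f2L_li : LinearIndependent (LaurentPolynomial ℤ) f2L := by
  rw [linearIndependent_iff']
  intro s
  induction s using Finset.strongInductionOn with
  | _ s ih =>
    intro g hsum i hi
    have hne : s.Nonempty := ⟨i, hi⟩
    set m := s.max' hne with hm
    have hgm : g m = 0 := by
      have := congrArg (fun p : LPoly => p.coeff m) hsum
      simp only [Polynomial.finset_sum_coeff, Polynomial.coeff_smul, coeff_zero] at this
      rw [Finset.sum_eq_single m] at this
      · simpa [f2L_coeff_self] using this
      · intro b hb hbm
        have : b < m := lt_of_le_of_ne (s.le_max' b hb) hbm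
        simp [f2L_coeff_of_lt this]
      · intro h; exact absurd (s.max'_mem hne) h
    have hsum' : ∑ j ∈ s.erase m, g j • f2L j = 0 := by
      rw [← Finset.add_sum_erase s _ (s.max'_mem hne)] at hsum
      rw [hgm] at hsum; simpa using hsum
    rcases eq_or_ne i m with rfl | hne'
    · exact hgm
    · exact ih (s.erase m) (Finset.erase_ssubset (s.max'_mem hne))
        g hsum' i (Finset.mem_erase.mpr ⟨hne', hi⟩)

lemma f2L_span : Submodule.span (LaurentPolynomial ℤ) (Set.range f2L) = ⊤ := by
  rw [eq_top_iff]
  rintro p -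
  suffices h : ∀ (n : ℕ) (p : LPoly), p.degree < (n : WithBot ℕ) →
      p ∈ Submodule.span (LaurentPolynomial ℤ) (Set.range f2L) by
    refine h (p.natDegree + 1) p ?_
    exact lt_of_le_of_lt degree_le_natDegree (by exact_mod_cast Nat.lt_succ_self _)
  intro n
  induction n with
  | zero =>
    intro p hp
    have : p = 0 := degree_eq_bot.mp (Nat.WithBot.lt_zero_iff.mp (by exact_mod_cast hp))
    simp [this]
  | succ n ih =>
    intro p hp
    set q := p - p.coeff n • f2L n with hq
    have hqdeg : q.degree < (n : WithBot ℕ) := by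
      rw [Polynomial.degree_lt_iff_coeff_zero]
      intro m hm
      have hm' : n ≤ m := by exact_mod_cast hm
      rw [hq]
      simp only [Polynomial.coeff_sub, Polynomial.coeff_smul, smul_eq_mul]
      rcases eq_or_lt_of_le hm' with rfl | hlt
      · rw [f2L_coeff_self]; ring
      · have hpm : p.coeff m = 0 := by
          apply coeff_eq_zero_of_degree_lt
          exact lt_of_lt_of_le hp (by exact_mod_cast hlt)
        rw [hpm, f2L_coeff_of_lt hlt, mul_zero, sub_zero]
    have hqmem := ih q hqdeg
    have : p = q + p.coeff n • f2L n := by rw [hq]; ring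
    rw [this]
    exact Submodule.add_mem _ hqmem
      (Submodule.smul_mem _ _ (Submodule.subset_span ⟨n, rfl⟩))

noncomputable def bT : Module.Basis ℤ ℤ (LaurentPolynomial ℤ) := AddMonoidAlgebra.basis ℤ ℤ

lemma bT_apply (i : ℤ) : bT i = LaurentPolynomial.T i :=
  AddMonoidAlgebra.basis_apply ℤ i

noncomputable def bF : Module.Basis ℕ (LaurentPolynomial ℤ) LPoly :=
  Module.Basis.mk f2L_li (by rw [f2L_span])

noncomputable def bB : Module.Basis (ℤ × ℕ) ℤ LPoly := bT.smulTower bF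

lemma bB_apply (p : ℤ × ℕ) :
    bB p = Polynomial.C (LaurentPolynomial.T (R := ℤ) p.1) * f2L p.2 := by
  rw [bB, Module.Basis.smulTower_apply, bT_apply, bF, Module.Basis.mk_apply, Polynomial.smul_eq_C_mul]

theorem f2_family_basis_laurent :
    LinearIndependent ℤ
      (fun p : ℤ × ℕ => Polynomial.C (LaurentPolynomial.T (R := ℤ) p.1) * f2L p.2) ∧
    Submodule.span ℤ
      (Set.range (fun p : ℤ × ℕ =>
        Polynomial.C (LaurentPolynomial.T (R := ℤ) p.1) * f2L p.2)) = ⊤ := by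
  have hB : (fun p : ℤ × ℕ =>
      Polynomial.C (LaurentPolynomial.T (R := ℤ) p.1) * f2L p.2) = ⇑bB :=
    funext fun p => (bB_apply p).symm
  rw [hB]
  exact ⟨bB.linearIndependent, bB.span_eq⟩
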